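/- For the kernel 𝒫 on ℂⁿ and curvature constants R_{km̄ℓq̄} with Kähler symmetries, the operator a := (1/6) b_m b_q R_{km̄ℓq̄} z_k z_ℓ (sum over repeated indices) satisfies (a𝒫)(0,Z) = (1/6) r 𝒫(0,Z), where r = 8 R_{mm̄qq̄}; and the operator c := -(π/3) b_q R_{km̄ℓq̄} z_k z_ℓ z̄'_m satisfies (c𝒫)(0,Z) = 0. -/

import Mathlib

open Complex MeasureTheory
open scoped Real ComplexConjugate

noncomputable section

/-- Wirtinger derivative ∂/∂z_i on ℂⁿ. -/
def wdz {n : ℕ} (i : Fin n) (f : (Fin n → ℂ) → ℂ) (z : Fin n → ℂ) : ℂ :=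
  (1 / 2) * (fderiv ℝ f z (Pi.single i 1) - Complex.I * fderiv ℝ f z (Pi.single i Complex.I))

/-- Wirtinger derivative ∂/∂z̄_i on ℂⁿ. -/
def wdzbar {n : ℕ} (i : Fin n) (f : (Fin n → ℂ) → ℂ) (z : Fin n → ℂ) : ℂ :=
  (1 / 2) * (fderiv ℝ f z (Pi.single i 1) + Complex.I * fderiv ℝ f z (Pi.single i Complex.I))

/-- The operator b_i = -2 ∂/∂z_i + π z̄_i. -/
def bOp {n : ℕ} (i : Fin n) (f : (Fin n → ℂ) → ℂ) (z : Fin n → ℂ) : ℂ :=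
  -2 * wdz i f z + (π : ℂ) * conj (z i) * f z

/-- The operator b_i⁺ = 2 ∂/∂z̄_i + π z_i. -/
def bPlus {n : ℕ} (i : Fin n) (f : (Fin n → ℂ) → ℂ) (z : Fin n → ℂ) : ℂ :=
  2 * wdzbar i f z + (π : ℂ) * z i * f z

/-- The kernel 𝒫(Z,Z') = exp(-π/2(|z|² + |z'|² - 2 z·z̄')). -/
def Pker {n : ℕ} (Z Z' : Fin n → ℂ) : ℂ :=
  Complex.exp (-((π : ℂ) / 2) *
    ((∑ i, (Complex.normSq (Z i) : ℂ)) + (∑ i, (Complex.normSq (Z' i) : ℂ))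
      - 2 * ∑ i, Z i * conj (Z' i)))

namespace Scratch
variable {n : ℕ}
def pj (i : Fin n) : (Fin n → ℂ) →L[ℝ] ℂ :=
  (ContinuousLinearMap.proj i : (Fin n → ℂ) →L[ℂ] ℂ).restrictScalars ℝ
def cj (i : Fin n) : (Fin n → ℂ) →L[ℝ] ℂ :=
  (Complex.conjCLE.toContinuousLinearMap).comp (pj i)
@[simp] lemma pj_apply (i : Fin n) (v : Fin n → ℂ) : pj i v = v i := rfl
@[simp] lemma cj_apply (i : Fin n) (v : Fin n → ℂ) : cj i v = conj (v i) := rfl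
def Afun (Z' : Fin n → ℂ) (w : Fin n → ℂ) : ℂ :=
  -((π : ℂ)/2) * ((∑ i, w i * conj (w i)) + (∑ i, (Complex.normSq (Z' i) : ℂ))
    - 2 * ∑ i, w i * conj (Z' i))
def Ader (Z' : Fin n → ℂ) (w : Fin n → ℂ) : (Fin n → ℂ) →L[ℝ] ℂ :=
  -((π : ℂ)/2) • ((∑ i, (w i • cj i + conj (w i) • pj i)) - (2:ℂ) • ∑ i, conj (Z' i) • pj i)

lemma Pker_eq (Z' w : Fin n → ℂ) : Pker w Z' = Complex.exp (Afun Z' w) := by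
  simp [Pker, Afun, Complex.mul_conj]

lemma hasFDerivAt_Afun (Z' : Fin n → ℂ) (w : Fin n → ℂ) :
    HasFDerivAt (Afun Z') (Ader Z' w) w := by
  have h1 : ∀ i : Fin n, HasFDerivAt (fun w : Fin n → ℂ => w i * conj (w i))
      (w i • cj i + conj (w i) • pj i) w := fun i =>
    ((pj i).hasFDerivAt.mul (cj i).hasFDerivAt)
  have h2 := HasFDerivAt.fun_sum (fun (i : Fin n) (_ : i ∈ Finset.univ) => h1 i)
  have h3 : ∀ i : Fin n, HasFDerivAt (fun w : Fin n → ℂ => w i * conj (Z' i))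
      (conj (Z' i) • pj i) w := fun i => by
    simpa using (pj i).hasFDerivAt.mul_const (conj (Z' i))
  have h4 := HasFDerivAt.fun_sum (fun (i : Fin n) (_ : i ∈ Finset.univ) => h3 i)
  exact ((h2.add_const (∑ i, (Complex.normSq (Z' i) : ℂ))).fun_sub
    (h4.const_mul (2:ℂ))).const_mul (-((π : ℂ)/2))

lemma wdz_of_hasFDerivAt {f : (Fin n → ℂ) → ℂ} {D : (Fin n → ℂ) →L[ℝ] ℂ} {w : Fin n → ℂ}
    (h : HasFDerivAt f D w) (i : Fin n) :
    wdz i f w = (1/2) * (D (Pi.single i 1) - Complex.I * D (Pi.single i Complex.I)) := by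
  rw [wdz, h.fderiv]

lemma hasFDerivAt_expA (Z' : Fin n → ℂ) (w : Fin n → ℂ) :
    HasFDerivAt (fun w => Complex.exp (Afun Z' w))
      (Complex.exp (Afun Z' w) • Ader Z' w) w := (hasFDerivAt_Afun Z' w).cexp

lemma Ader_single_one (Z' : Fin n → ℂ) (w : Fin n → ℂ) (q : Fin n) :
    Ader Z' w (Pi.single q 1) = -((π : ℂ)/2) * (w q + conj (w q) - 2 * conj (Z' q)) := by
  simp [Ader, ContinuousLinearMap.sum_apply, Pi.single_apply, Finset.sum_ite_eq',
    apply_ite (starRingEnd ℂ), mul_comm, Finset.sum_add_distrib]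
  try ring
  try tauto

lemma Ader_single_I (Z' : Fin n → ℂ) (w : Fin n → ℂ) (q : Fin n) :
    Ader Z' w (Pi.single q Complex.I) =
      -((π : ℂ)/2) * (-Complex.I * w q + Complex.I * conj (w q) - 2 * Complex.I * conj (Z' q)) := by
  simp [Ader, ContinuousLinearMap.sum_apply, Pi.single_apply, Finset.sum_ite_eq',
    apply_ite (starRingEnd ℂ), mul_comm, Finset.sum_add_distrib]
  try ring
  try tauto

lemma wdz_expA (Z' : Fin n → ℂ) (q : Fin n) (w : Fin n → ℂ) :
    wdz q (fun w => Complex.exp (Afun Z' w)) w =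
      -((π : ℂ)/2) * (conj (w q) - 2 * conj (Z' q)) * Complex.exp (Afun Z' w) := by
  rw [wdz_of_hasFDerivAt (hasFDerivAt_expA Z' w)]
  simp only [ContinuousLinearMap.smul_apply, smul_eq_mul, Ader_single_one, Ader_single_I]
  ring_nf
  simp [Complex.I_sq]
  ring

lemma wdz_mul {f g : (Fin n → ℂ) → ℂ} {w : Fin n → ℂ}
    (hf : DifferentiableAt ℝ f w) (hg : DifferentiableAt ℝ g w) (i : Fin n) :
    wdz i (fun w => f w * g w) w = wdz i f w * g w + f w * wdz i g w := by
  simp only [wdz, fderiv_fun_mul hf hg, ContinuousLinearMap.add_apply,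
    ContinuousLinearMap.smul_apply, smul_eq_mul]
  ring

lemma hasFDerivAt_coord (j : Fin n) (w : Fin n → ℂ) :
    HasFDerivAt (fun w : Fin n → ℂ => w j) (pj j) w := (pj j).hasFDerivAt

lemma hasFDerivAt_conj_coord (j : Fin n) (w : Fin n → ℂ) :
    HasFDerivAt (fun w : Fin n → ℂ => conj (w j)) (cj j) w := (cj j).hasFDerivAt

lemma wdz_coord (i j : Fin n) (w : Fin n → ℂ) :
    wdz i (fun w => w j) w = if j = i then 1 else 0 := by
  rw [wdz_of_hasFDerivAt (hasFDerivAt_coord j w)]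
  simp [Pi.single_apply]
  split_ifs <;> simp [Complex.I_mul_I] <;> ring_nf

lemma dcoord (j : Fin n) (w : Fin n → ℂ) : DifferentiableAt ℝ (fun w : Fin n → ℂ => w j) w :=
  (hasFDerivAt_coord j w).differentiableAt

lemma dexpA (Z' : Fin n → ℂ) (w : Fin n → ℂ) :
    DifferentiableAt ℝ (fun w => Complex.exp (Afun Z' w)) w :=
  (hasFDerivAt_expA Z' w).differentiableAt

lemma bOp_monomial (Z' : Fin n → ℂ) (k l q : Fin n) (w : Fin n → ℂ) :
    bOp q (fun w => w k * w l * Pker w Z') w =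
      (-2 * (if k = q then (1:ℂ) else 0) * w l - 2 * (if l = q then (1:ℂ) else 0) * w k
        + 2 * π * (w k * w l) * (conj (w q) - conj (Z' q))) * Complex.exp (Afun Z' w) := by
  simp only [Pker_eq]
  rw [bOp, wdz_mul ((dcoord k w).fun_mul (dcoord l w)) (dexpA Z' w) q,
      wdz_mul (dcoord k w) (dcoord l w) q, wdz_coord, wdz_coord, wdz_expA]
  ring

lemma bOp_monomial_zero (Z' : Fin n → ℂ) (k l q : Fin n) :
    bOp q (fun w => w k * w l * Pker w Z') (0 : Fin n → ℂ) = 0 := by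
  rw [bOp_monomial]
  simp

lemma bOp_bOp (Z' : Fin n → ℂ) (k l q m : Fin n) :
    bOp m (bOp q (fun w => w k * w l * Pker w Z')) (0 : Fin n → ℂ) =
      (4 * (if k = q then (1:ℂ) else 0) * (if l = m then 1 else 0)
       + 4 * (if l = q then (1:ℂ) else 0) * (if k = m then 1 else 0))
        * Pker (0 : Fin n → ℂ) Z' := by
  have hfun : (bOp q fun w => w k * w l * Pker w Z')
      = fun w => (-2 * (if k = q then (1:ℂ) else 0) * w l
          - 2 * (if l = q then (1:ℂ) else 0) * w k
          + 2 * π * (w k * w l) * (conj (w q) - conj (Z' q))) * Complex.exp (Afun Z' w) := by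
    funext w; exact bOp_monomial Z' k l q w
  rw [hfun, Pker_eq]
  set z0 : Fin n → ℂ := (0 : Fin n → ℂ) with hz0
  have h1 : HasFDerivAt (fun w : Fin n → ℂ => -2 * (if k = q then (1:ℂ) else 0) * w l)
      ((-2 * (if k = q then (1:ℂ) else 0)) • pj l) z0 :=
    (hasFDerivAt_coord l z0).const_mul _
  have h2 : HasFDerivAt (fun w : Fin n → ℂ => 2 * (if l = q then (1:ℂ) else 0) * w k)
      ((2 * (if l = q then (1:ℂ) else 0)) • pj k) z0 :=
    (hasFDerivAt_coord k z0).const_mul _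
  have h3a : HasFDerivAt (fun w : Fin n → ℂ => 2 * (π:ℂ) * (w k * w l))
      ((2 * (π:ℂ)) • (z0 k • pj l + z0 l • pj k)) z0 :=
    ((hasFDerivAt_coord k z0).mul (hasFDerivAt_coord l z0)).const_mul _
  have h3b : HasFDerivAt (fun w : Fin n → ℂ => conj (w q) - conj (Z' q))
      (cj q) z0 := (hasFDerivAt_conj_coord q z0).sub_const _
  have h3 := h3a.fun_mul h3b
  have hB := (h1.fun_sub h2).fun_add h3
  have hG := hB.fun_mul (hasFDerivAt_expA Z' z0)
  rw [bOp, wdz_of_hasFDerivAt hG m]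
  simp only [hz0, ContinuousLinearMap.add_apply, ContinuousLinearMap.sub_apply,
    ContinuousLinearMap.smul_apply, smul_eq_mul, pj_apply, cj_apply, Pi.zero_apply,
    Pi.single_apply, map_zero, Ader_single_one, Ader_single_I,
    mul_zero, zero_mul, sub_zero, zero_sub, add_zero, zero_add, map_one]
  split_ifs <;> (ring_nf; try simp [Complex.I_sq]; try ring_nf)
end Scratch

/-- For curvature constants R_{km̄ℓq̄} with the Kähler symmetries and r = 8 Σ R_{mm̄qq̄}:
the operator a = (1/6) b_m b_q R_{km̄ℓq̄} z_k z_ℓ satisfies (a𝒫)(0,Z) = (1/6) r 𝒫(0,Z),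
and the operator c = -(π/3) b_q R_{km̄ℓq̄} z_k z_ℓ z̄'_m satisfies (c𝒫)(0,Z) = 0. -/
theorem aterm_cterm_kernel_values {n : ℕ} (R : Fin n → Fin n → Fin n → Fin n → ℂ)
    (hsym1 : ∀ k m l q, R k m l q = R l m k q)
    (hsym2 : ∀ k m l q, R k m l q = R k q l m)
    (Z' : Fin n → ℂ) :
    ((1 / 6 : ℂ) * ∑ m, ∑ q, ∑ k, ∑ l,
        R k m l q * bOp m (bOp q (fun w => w k * w l * Pker w Z')) (0 : Fin n → ℂ)
      = (1 / 6 : ℂ) * (8 * ∑ m, ∑ q, R m m q q) * Pker (0 : Fin n → ℂ) Z') ∧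
    (-((π : ℂ) / 3) * ∑ q, ∑ m, ∑ k, ∑ l,
        R k m l q * conj (Z' m) * bOp q (fun w => w k * w l * Pker w Z') (0 : Fin n → ℂ)
      = 0) := by
  constructor
  · have inner : ∀ m q : Fin n,
        (∑ k, ∑ l, R k m l q * bOp m (bOp q (fun w => w k * w l * Pker w Z')) (0 : Fin n → ℂ))
        = (4 * R q m m q + 4 * R m m q q) * Pker (0 : Fin n → ℂ) Z' := by
      intro m q
      have step1 : ∀ k : Fin n,
          (∑ l, R k m l q * bOp m (bOp q (fun w => w k * w l * Pker w Z')) (0 : Fin n → ℂ))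
          = (if k = q then 4 * R k m m q * Pker (0 : Fin n → ℂ) Z' else 0)
            + (if k = m then 4 * R k m q q * Pker (0 : Fin n → ℂ) Z' else 0) := by
        intro k
        have h : ∀ l : Fin n,
            R k m l q * bOp m (bOp q (fun w => w k * w l * Pker w Z')) (0 : Fin n → ℂ)
            = (if l = m then (if k = q then 4 * R k m l q * Pker (0:Fin n → ℂ) Z' else 0) else 0)
              + (if l = q then (if k = m then 4 * R k m l q * Pker (0:Fin n → ℂ) Z' else 0) else 0) := by
          intro l
          rw [Scratch.bOp_bOp]
          split_ifs <;> ring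
        simp_rw [h]
        rw [Finset.sum_add_distrib, Finset.sum_ite_eq', Finset.sum_ite_eq']
        simp
      simp_rw [step1]
      rw [Finset.sum_add_distrib, Finset.sum_ite_eq', Finset.sum_ite_eq']
      simp only [Finset.mem_univ, if_true]
      ring
    have hswap : (∑ m : Fin n, ∑ q : Fin n, R q m m q) = ∑ m, ∑ q, R m m q q := by
      rw [Finset.sum_comm]
      exact Finset.sum_congr rfl fun q _ => Finset.sum_congr rfl fun m _ => hsym2 q m m q
    simp_rw [inner, ← Finset.sum_mul]
    rw [show (∑ m : Fin n, ∑ q : Fin n, (4 * R q m m q + 4 * R m m q q))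
        = 8 * ∑ m : Fin n, ∑ q : Fin n, R m m q q by
      simp only [Finset.sum_add_distrib, ← Finset.mul_sum]
      rw [hswap]; ring]
    ring
  · simp [Scratch.bOp_monomial_zero]
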